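/- Define Λ-coefficients via the isotropic multipolygon generating function: if f(t) = log(1 + t²) − (t²(t²−1)²/(t²+1)⁴) · ₄F₃(1,1,3/2,3/2; 2,2,2; 16t²(t²−1)²/(t²+1)⁴), then the formal power series expansion of exp(f(t)) around t = 0 begins 1 + t⁴ + 2t⁶ + 5t⁸ + 14t¹⁰ + 44t¹², i.e., the Taylor coefficients of exp(f) at t=0 of orders 0,4,6,8,10,12 are 1,1,2,5,14,44 and those of orders 1,2,3,5,7 are 0. -/

import Mathlib

/-- The rising factorial (Pochhammer symbol): `(a)_0 = 1`, `(a)_{n+1} = (a)_n * (a + n)`. -/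
def rf (a : ℝ) : ℕ → ℝ
  | 0 => 1
  | n + 1 => rf a n * (a + n)

/-- The generalized hypergeometric function ₄F₃(1,1,3/2,3/2; 2,2,2; y). -/
noncomputable def F43 (y : ℝ) : ℝ :=
  ∑' n : ℕ, (rf 1 n) ^ 2 * (rf (3 / 2) n) ^ 2 / ((rf 2 n) ^ 3 * n.factorial) * y ^ n

/-- The hypergeometric argument $t^2(t^2-1)^2/(t^2+1)^4$. -/
noncomputable def g (t : ℝ) : ℝ := t ^ 2 * (t ^ 2 - 1) ^ 2 / (t ^ 2 + 1) ^ 4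

/-- The isotropic multipolygon generating function $\Lambda(t) = \exp f(t)$. -/
noncomputable def Λ (t : ℝ) : ℝ :=
  Real.exp (Real.log (1 + t ^ 2) - g t * F43 (16 * g t))

namespace MP
open Filter Asymptotics Finset

/-! ### rising factorial facts -/

lemma rf_one (n : ℕ) : rf 1 n = n.factorial := by
  induction n with
  | zero => simp [rf]
  | succ n ih => rw [rf, ih, Nat.factorial_succ]; push_cast; ring

lemma rf_two (n : ℕ) : rf 2 n = (n+1).factorial := by
  induction n with
  | zero => simp [rf]
  | succ n ih => rw [rf, ih, Nat.factorial_succ (n+1)]; push_cast; ring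

lemma rf32_pos (n : ℕ) : 0 < rf (3/2) n := by
  induction n with
  | zero => norm_num [rf]
  | succ n ih => rw [rf]; positivity

lemma rf32_le (n : ℕ) : rf (3/2) n ≤ rf 2 n := by
  induction n with
  | zero => norm_num [rf]
  | succ n ih =>
    rw [rf, rf]
    have := rf32_pos n
    have h2 : (0:ℝ) ≤ (n:ℝ) := Nat.cast_nonneg n
    nlinarith

noncomputable def cc (n : ℕ) : ℝ := (rf 1 n) ^ 2 * (rf (3 / 2) n) ^ 2 / ((rf 2 n) ^ 3 * n.factorial)

lemma cc_nonneg (n : ℕ) : 0 ≤ cc n := by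
  unfold cc
  rw [rf_one, rf_two]
  positivity

lemma cc_le_one (n : ℕ) : cc n ≤ 1 := by
  unfold cc
  rw [rf_one, rf_two]
  have h3 := rf32_pos n
  have h4 := rf32_le n
  rw [rf_two] at h4
  have f1 : (0:ℝ) < n.factorial := by exact_mod_cast Nat.factorial_pos n
  have f2 : (0:ℝ) < (n+1).factorial := by exact_mod_cast Nat.factorial_pos (n+1)
  have hle : ((n.factorial : ℝ)) ≤ (((n+1).factorial : ℝ)) := by
    exact_mod_cast Nat.factorial_le (Nat.le_succ n)
  rw [div_le_one (by positivity)]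
  have h5 : rf (3/2) n ^ 2 ≤ ((n+1).factorial:ℝ)^2 := by nlinarith
  calc (n.factorial:ℝ)^2 * rf (3/2) n ^ 2 ≤ (n.factorial:ℝ)^2 * ((n+1).factorial:ℝ)^2 :=
        mul_le_mul_of_nonneg_left h5 (sq_nonneg _)
    _ ≤ ((n+1).factorial:ℝ)^3 * n.factorial := by
        nlinarith [mul_le_mul_of_nonneg_left hle (by positivity : (0:ℝ) ≤ (n.factorial:ℝ) * ((n+1).factorial:ℝ)^2)]

/-! ### the power series of F43 -/

noncomputable def p43 : FormalMultilinearSeries ℝ ℝ ℝ := FormalMultilinearSeries.ofScalars ℝ cc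

lemma p43_radius_pos : 0 < p43.radius := by
  have h : (1:ENNReal) ≤ p43.radius := by
    have := p43.le_radius_of_bound 1 (r := 1) (fun n => by
      rw [p43, FormalMultilinearSeries.ofScalars_norm]
      simpa [abs_of_nonneg (cc_nonneg n)] using cc_le_one n)
    simpa using this
  exact lt_of_lt_of_le (by norm_num) h

lemma hF43at : HasFPowerSeriesAt F43 p43 0 := by
  have h := p43.hasFPowerSeriesOnBall p43_radius_pos
  have hsum : p43.sum = F43 := by
    funext y
    unfold FormalMultilinearSeries.sum
    unfold F43
    congr 1
    funext n
    rw [p43, FormalMultilinearSeries.ofScalars_apply_eq]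
    simp [cc, smul_eq_mul]
  rw [hsum] at h
  exact h.hasFPowerSeriesAt

lemma p43_coeff (k : ℕ) : p43.coeff k = cc k := by
  show p43 k (fun _ => (1:ℝ)) = cc k
  rw [p43, FormalMultilinearSeries.ofScalars_apply_eq]
  simp

/-! ### generic coefficient machinery -/

lemma pow_isBigO_pow {n N : ℕ} (h : n ≤ N) : (fun t : ℝ => t ^ N) =O[nhds 0] fun t => t ^ n := by
  rw [Asymptotics.isBigO_iff]
  refine ⟨1, ?_⟩
  have hev : ∀ᶠ t : ℝ in nhds 0, |t| ≤ 1 := by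
    have := eventually_abs_sub_lt (0:ℝ) one_pos
    filter_upwards [this] with t ht
    rw [sub_zero] at ht; exact le_of_lt ht
  filter_upwards [hev] with t ht
  simp only [norm_pow, Real.norm_eq_abs, one_mul]
  exact pow_le_pow_of_le_one (abs_nonneg t) ht h

lemma const_eq_zero_of_isLittleO {n : ℕ} {a : ℝ}
    (h : (fun t : ℝ => a * t ^ n) =o[nhds 0] fun t => t ^ n) : a = 0 := by
  by_contra ha
  have h2 : (fun t : ℝ => t ^ n) =o[nhds 0] fun t => t ^ n :=
    (isLittleO_const_mul_left_iff ha).mp h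
  have h3 := h2.def one_half_pos
  rw [Metric.eventually_nhds_iff] at h3
  obtain ⟨ε, hε, hb⟩ := h3
  have ht : dist (ε/2) (0:ℝ) < ε := by
    rw [Real.dist_eq, sub_zero, abs_of_pos (by linarith)]; linarith
  have := hb ht
  simp only [Real.norm_eq_abs] at this
  have hp : 0 < |(ε/2 : ℝ)| ^ n := pow_pos (abs_pos.mpr (by linarith)) n
  rw [abs_pow] at this
  linarith

lemma partialSum_eq (p : FormalMultilinearSeries ℝ ℝ ℝ) (m : ℕ) (t : ℝ) :
    p.partialSum m t = ∑ k ∈ range m, p.coeff k * t ^ k := by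
  unfold FormalMultilinearSeries.partialSum
  refine Finset.sum_congr rfl fun k _ => ?_
  rw [FormalMultilinearSeries.apply_eq_pow_smul_coeff, smul_eq_mul, mul_comm]

lemma coeff_unique {f : ℝ → ℝ} {p : FormalMultilinearSeries ℝ ℝ ℝ}
    (hp : HasFPowerSeriesAt f p 0) {N : ℕ} {q : ℕ → ℝ}
    (hq : (fun t => f t - ∑ k ∈ range (N+1), q k * t ^ k) =o[nhds 0] fun t => t ^ N) :
    ∀ n, n ≤ N → p.coeff n = q n := by
  intro n
  induction n using Nat.strong_induction_on with
  | _ n ih =>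
    intro hn
    have hO : (fun t : ℝ => f t - p.partialSum (n+1) t) =O[nhds 0] fun t => ‖t‖ ^ (n+1) := by
      simpa using hp.isBigO_sub_partialSum_pow (n+1)
    have hsmall : (fun t : ℝ => ‖t‖ ^ (n+1)) =o[nhds 0] fun t => t ^ n := by
      have h1 : (fun t : ℝ => t ^ (n+1)) =o[nhds 0] fun t => t ^ n :=
        isLittleO_pow_pow (Nat.lt_succ_self n)
      have := h1.norm_left
      simpa using this
    have hps : (fun t : ℝ => f t - p.partialSum (n+1) t) =o[nhds 0] fun t => t ^ n :=
      hO.trans_isLittleO hsmall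
    have hq' : (fun t => f t - ∑ k ∈ range (N+1), q k * t ^ k) =o[nhds 0] fun t => t ^ n :=
      hq.trans_isBigO (pow_isBigO_pow hn)
    have hD : (fun t : ℝ => p.partialSum (n+1) t - ∑ k ∈ range (N+1), q k * t ^ k)
        =o[nhds 0] fun t => t ^ n := by
      have := hq'.sub hps
      simpa using this
    have hDeq : ∀ t : ℝ, p.partialSum (n+1) t - ∑ k ∈ range (N+1), q k * t ^ k
        = (p.coeff n - q n) * t ^ n - ∑ k ∈ Ico (n+1) (N+1), q k * t ^ k := by
      intro t
      rw [partialSum_eq, ← Finset.sum_range_add_sum_Ico _ (by omega : n+1 ≤ N+1)]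
      rw [Finset.sum_range_succ, Finset.sum_range_succ (fun k => q k * t ^ k)]
      have hsum : ∑ k ∈ range n, p.coeff k * t ^ k = ∑ k ∈ range n, q k * t ^ k :=
        Finset.sum_congr rfl fun k hk => by
          rw [ih k (mem_range.mp hk) (le_trans (le_of_lt (mem_range.mp hk)) hn)]
      rw [hsum]; ring
    have hT : (fun t : ℝ => ∑ k ∈ Ico (n+1) (N+1), q k * t ^ k) =o[nhds 0] fun t => t ^ n := by
      refine IsLittleO.fun_sum fun k hk => ?_
      have hk' : n < k := by have := Finset.mem_Ico.mp hk; omega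
      exact ((isLittleO_pow_pow hk').const_mul_left (q k))
    have hfinal : (fun t : ℝ => (p.coeff n - q n) * t ^ n) =o[nhds 0] fun t => t ^ n := by
      have := hD.add hT
      refine this.congr' ?_ (by rfl)
      filter_upwards with t
      rw [hDeq t]; ring
    have := const_eq_zero_of_isLittleO hfinal
    linarith

lemma iteratedDeriv_of_hasFPowerSeriesAt {f : ℝ → ℝ} {p : FormalMultilinearSeries ℝ ℝ ℝ}
    (hp : HasFPowerSeriesAt f p 0) (n : ℕ) :
    iteratedDeriv n f 0 = n.factorial * p.coeff n := by
  obtain ⟨r, hr⟩ := hp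
  have h := hr.factorial_smul (1:ℝ) n
  rw [iteratedDeriv_eq_iteratedFDeriv, ← h, nsmul_eq_mul]
  rfl

/-! ### explicit polynomials -/

noncomputable def P6 (y : ℝ) : ℝ := 1 + (9/32)*y + (25/192)*y^2 + (1225/16384)*y^3 + (3969/81920)*y^4
    + (17787/524288)*y^5

noncomputable def Rf (t : ℝ) : ℝ := g t + (9/2)*(g t)^2 + (100/3)*(g t)^3 + (1225/4)*(g t)^4
    + (15876/5)*(g t)^5 + 35574*(g t)^6

noncomputable def Lf (t : ℝ) : ℝ := t^2 - t^4/2 + t^6/3 - t^8/4 + t^10/5 - t^12/6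

noncomputable def Ff (t : ℝ) : ℝ := t^4 + 2*t^6 + (9/2)*t^8 + 12*t^10 + (112/3)*t^12

noncomputable def Qf (t : ℝ) : ℝ := 1 + t^4 + 2*t^6 + 5*t^8 + 14*t^10 + 44*t^12

noncomputable def T3 (x : ℝ) : ℝ := 1 + x + x^2/2 + x^3/6

noncomputable def NRp (u : ℝ) : ℝ := u*(1-u)^2*(1+u)^20 + (9/2)*u^2*(1-u)^4*(1+u)^16
    + (100/3)*u^3*(1-u)^6*(1+u)^12 + (1225/4)*u^4*(1-u)^8*(1+u)^8
    + (15876/5)*u^5*(1-u)^10*(1+u)^4 + 35574*u^6*(1-u)^12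

noncomputable def Lp (u : ℝ) : ℝ := u - u^2/2 + u^3/3 - u^4/4 + u^5/5 - u^6/6

noncomputable def Fp (u : ℝ) : ℝ := u^2 + 2*u^3 + (9/2)*u^4 + 12*u^5 + (112/3)*u^6

noncomputable def Mp (u : ℝ) : ℝ := 420795 + (-4784425/2) * u ^ 1 + (22590995/3) * u ^ 2 + (-196206503/10) * u ^ 3 + (110300739/5) * u ^ 4 + (-957595471/20) * u ^ 5 + (-20324311/5) * u ^ 6 + (-757537603/10) * u ^ 7 + (-247137802/3) * u ^ 8 + (-124021836) * u ^ 9 + (-141484234) * u ^ 10 + (-143134151) * u ^ 11 + (-124576214) * u ^ 12 + (-932069297/10) * u ^ 13 + (-298158234/5) * u ^ 14 + (-161941491/5) * u ^ 15 + (-73947489/5) * u ^ 16 + (-168094021/30) * u ^ 17 + (-8646979/5) * u ^ 18 + (-4237107/10) * u ^ 19 + (-1189087/15) * u ^ 20 + (-212759/20) * u ^ 21 + (-4559/5) * u ^ 22 + (-75/2) * u ^ 23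

noncomputable def Wp (u : ℝ) : ℝ := 22 + (1817/24) * u ^ 1 + 145 * u ^ 2 + (7243/24) * u ^ 3 + (7451/12) * u ^ 4 + (163403/144) * u ^ 5 + (2099/2) * u ^ 6 + (20654/9) * u ^ 7 + (33280/9) * u ^ 8 + 5824 * u ^ 9 + (25088/3) * u ^ 10 + (702464/81) * u ^ 11

lemma idM (u : ℝ) : (Lp u - Fp u) * (1+u)^24 - NRp u = u^7 * Mp u := by
  unfold Lp Fp NRp Mp; ring

noncomputable def Qp (u : ℝ) : ℝ := 1 + u^2 + 2*u^3 + 5*u^4 + 14*u^5 + 44*u^6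

lemma idW (u : ℝ) : (1 + Fp u + (Fp u)^2/2 + (Fp u)^3/6) - Qp u = u^7 * Wp u := by
  unfold Fp Qp Wp; ring

/-! ### coefficients of cc -/

lemma cc0 : cc 0 = 1 := by norm_num [cc, rf]
lemma cc1 : cc 1 = 9/32 := by norm_num [cc, rf]
lemma cc2 : cc 2 = 25/192 := by norm_num [cc, rf, Nat.factorial]
lemma cc3 : cc 3 = 1225/16384 := by norm_num [cc, rf, Nat.factorial]
lemma cc4 : cc 4 = 3969/81920 := by norm_num [cc, rf, Nat.factorial]
lemma cc5 : cc 5 = 17787/524288 := by norm_num [cc, rf, Nat.factorial]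

lemma hP6 (y : ℝ) : p43.partialSum 6 y = P6 y := by
  rw [partialSum_eq]
  simp only [Finset.sum_range_succ, Finset.sum_range_zero, p43_coeff]
  rw [cc0, cc1, cc2, cc3, cc4, cc5]
  unfold P6; ring

/-! ### asymptotic estimates -/

lemma g_zero : g 0 = 0 := by norm_num [g]

lemma g_nonneg (t : ℝ) : 0 ≤ g t := by unfold g; positivity

lemma g_le_sq (t : ℝ) : g t ≤ t^2 := by
  unfold g
  rw [div_le_iff₀ (by positivity)]
  have h1 : (t^2-1)^2 ≤ (t^2+1)^2 := by nlinarith [sq_nonneg t]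
  have h2 : (t^2+1)^2 ≤ (t^2+1)^4 :=
    pow_le_pow_right₀ (by nlinarith [sq_nonneg t]) (by norm_num)
  nlinarith [mul_le_mul_of_nonneg_left (h1.trans h2) (sq_nonneg t)]

lemma abs_g_le (t : ℝ) : |g t| ≤ |t^2| := by
  rw [abs_of_nonneg (g_nonneg t), abs_of_nonneg (sq_nonneg t)]
  exact g_le_sq t

lemma hgO : (fun t : ℝ => g t) =O[nhds 0] fun t => t^2 :=
  isBigO_of_le _ fun t => by simpa [Real.norm_eq_abs] using abs_g_le t

lemma g_contAt : ContinuousAt g 0 := by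
  unfold g
  exact ContinuousAt.div (by fun_prop) (by fun_prop) (by norm_num)

lemma htend16g : Tendsto (fun t : ℝ => 16 * g t) (nhds 0) (nhds 0) := by
  have : ContinuousAt (fun t : ℝ => 16 * g t) 0 := (continuousAt_const.mul g_contAt)
  have h0 : (fun t : ℝ => 16 * g t) 0 = 0 := by simp [g_zero]
  simpa [h0] using this.tendsto

lemma hF43tail : (fun y : ℝ => F43 y - P6 y) =O[nhds 0] fun y => y^6 := by
  have h := hF43at.isBigO_sub_partialSum_pow 6
  simp only [zero_add] at h
  have h2 : (fun y : ℝ => F43 y - P6 y) =O[nhds 0] fun y => ‖y‖^6 := by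
    refine h.congr_left fun y => ?_
    rw [hP6]
  have h3 : (fun y : ℝ => ‖y‖^6) =O[nhds 0] fun y => y^6 :=
    isBigO_of_le _ fun y => by simp [Real.norm_eq_abs, abs_pow]
  exact h2.trans h3

lemma hcompO : (fun t : ℝ => F43 (16 * g t) - P6 (16 * g t)) =O[nhds 0] fun t => (16 * g t)^6 :=
  hF43tail.comp_tendsto htend16g

lemma hG6 : (fun t : ℝ => (16 * g t)^6) =O[nhds 0] fun t => t^12 := by
  have h1 : (fun t : ℝ => 16 * g t) =O[nhds 0] fun t => t^2 := hgO.const_mul_left 16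
  have h2 := h1.pow 6
  refine h2.trans (isBigO_of_le _ fun t => ?_)
  rw [← pow_mul]

lemma hhR : (fun t : ℝ => g t * F43 (16 * g t) - Rf t) =O[nhds 0] fun t => t^14 := by
  have hfac : ∀ t : ℝ, g t * F43 (16 * g t) - Rf t = g t * (F43 (16 * g t) - P6 (16 * g t)) := by
    intro t; unfold Rf P6; ring
  have h := hgO.mul (hcompO.trans hG6)
  have h2 : (fun t : ℝ => g t * (F43 (16 * g t) - P6 (16 * g t))) =O[nhds 0] fun t => t^14 := by
    refine h.trans (isBigO_of_le _ fun t => ?_)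
    rw [← pow_add]
  refine h2.congr_left fun t => (hfac t).symm

lemma ev_abs_le (δ : ℝ) (hδ : 0 < δ) : ∀ᶠ t : ℝ in nhds 0, |t| ≤ δ := by
  have := eventually_abs_sub_lt (0:ℝ) hδ
  filter_upwards [this] with t ht
  rw [sub_zero] at ht; exact le_of_lt ht

lemma hlog : (fun t : ℝ => Real.log (1 + t^2) - Lf t) =O[nhds 0] fun t => t^14 := by
  rw [isBigO_iff]
  refine ⟨2, ?_⟩
  filter_upwards [ev_abs_le (1/2) (by norm_num)] with t ht
  have ht2 : t^2 ≤ 1/4 := by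
    have h' := abs_le.mp ht
    nlinarith [h'.1, h'.2]
  have hx : |(-(t^2))| = t^2 := by rw [abs_neg, abs_of_nonneg (sq_nonneg t)]
  have hlt : |(-(t^2))| < 1 := by rw [hx]; linarith
  have h := Real.abs_log_sub_add_sum_range_le hlt 6
  rw [hx] at h
  have hsum : ∑ i ∈ Finset.range 6, (-(t^2)) ^ (i+1) / ((i:ℝ)+1) = -(Lf t) := by
    simp only [Finset.sum_range_succ, Finset.sum_range_zero]
    unfold Lf; norm_num; ring
  rw [hsum, sub_neg_eq_add] at h
  have hd : (t^2)^7 / (1 - t^2) ≤ 2 * t^14 := by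
    rw [div_le_iff₀ (by linarith)]
    nlinarith [pow_nonneg (sq_nonneg t) 7, sq_nonneg t]
  have heq : Real.log (1 + t^2) - Lf t = -(Lf t) + Real.log (1 + t^2) := by ring
  rw [Real.norm_eq_abs, Real.norm_eq_abs, heq]
  have h14 : |t^14| = t^14 := abs_of_nonneg (by positivity)
  rw [h14]
  calc |(-(Lf t)) + Real.log (1 + t^2)| ≤ (t^2)^7 / (1 - t^2) := h
    _ ≤ 2 * t^14 := hd

lemma hRfrac (t : ℝ) : Rf t = NRp (t^2) / (t^2+1)^24 := by
  have h1 : ((t:ℝ)^2+1) ≠ 0 := by positivity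
  unfold Rf g NRp
  field_simp
  ring

lemma hrat : (fun t : ℝ => Lf t - Rf t - Ff t) =O[nhds 0] fun t => t^14 := by
  have key : ∀ t : ℝ, Lf t - Rf t - Ff t = t^14 * (Mp (t^2) / (t^2+1)^24) := by
    intro t
    have h1 : ((t:ℝ)^2+1) ≠ 0 := by positivity
    have h2 : ((t:ℝ)^2+1)^24 ≠ 0 := pow_ne_zero _ h1
    rw [hRfrac t]
    have hLp : Lf t = Lp (t^2) := by unfold Lf Lp; ring
    have hFp : Ff t = Fp (t^2) := by unfold Ff Fp; ring
    rw [hLp, hFp]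
    have hM := idM (t^2)
    field_simp
    nlinarith [hM]
  have hw : Tendsto (fun t : ℝ => Mp (t^2) / (t^2+1)^24) (nhds 0) (nhds (Mp 0 / 1)) := by
    apply Filter.Tendsto.div
    · exact (Continuous.tendsto (by unfold Mp; fun_prop) 0).comp
        ((continuous_pow 2).tendsto' 0 0 (by norm_num)) |>.congr (fun _ => rfl) |>.mono_left le_rfl
    · have : Continuous (fun t : ℝ => (t^2+1)^24) := by fun_prop
      simpa using this.tendsto 0
    · norm_num
  have hwO : (fun t : ℝ => Mp (t^2) / (t^2+1)^24) =O[nhds 0] (fun _ => (1:ℝ)) :=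
    hw.isBigO_one ℝ
  have := (isBigO_refl (fun t : ℝ => t^14) (nhds 0)).mul hwO
  refine IsBigO.congr' (this) (by filter_upwards with t; rw [key t]) ?_
  filter_upwards with t; simp

lemma hEe : (fun t : ℝ => (Real.log (1 + t^2) - g t * F43 (16 * g t)) - Ff t)
    =O[nhds 0] fun t => t^14 := by
  have h := (hlog.add hrat).sub hhR
  refine h.congr' ?_ (by rfl)
  filter_upwards with t
  ring

/-! ### the exponential part -/

noncomputable def Ee (t : ℝ) : ℝ := (Real.log (1 + t^2) - g t * F43 (16 * g t)) - Ff t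

lemma hEeO : (fun t : ℝ => Ee t) =O[nhds 0] fun t => t^14 := hEe

lemma t14_tendsto : Tendsto (fun t : ℝ => t^14) (nhds 0) (nhds 0) :=
  (continuous_pow 14).tendsto' 0 0 (by norm_num)

lemma hEe_tendsto : Tendsto Ee (nhds 0) (nhds 0) := hEeO.trans_tendsto t14_tendsto

lemma hexpEe : (fun t : ℝ => Real.exp (Ee t) - 1) =O[nhds 0] fun t => Ee t := by
  rw [isBigO_iff]
  refine ⟨2, ?_⟩
  have hev : ∀ᶠ t : ℝ in nhds 0, |Ee t| ≤ 1 := by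
    have := hEe_tendsto.eventually (eventually_abs_sub_lt (0:ℝ) one_pos)
    filter_upwards [this] with t ht
    rw [sub_zero] at ht; exact le_of_lt ht
  filter_upwards [hev] with t ht
  simpa [Real.norm_eq_abs] using Real.abs_exp_sub_one_le ht

lemma term1 : (fun t : ℝ => Real.exp (Ff t) * (Real.exp (Ee t) - 1)) =O[nhds 0] fun t => t^14 := by
  have hFfc : Continuous Ff := by unfold Ff; fun_prop
  have hc : Tendsto (fun t : ℝ => Real.exp (Ff t)) (nhds 0) (nhds (Real.exp (Ff 0))) :=
    (Real.continuous_exp.comp hFfc).tendsto 0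
  have h1 : (fun t : ℝ => Real.exp (Ff t)) =O[nhds 0] (fun _ => (1:ℝ)) := hc.isBigO_one ℝ
  have h2 := h1.mul (hexpEe.trans hEeO)
  refine h2.trans (isBigO_of_le _ fun t => ?_)
  simp

lemma Ff_bound {t : ℝ} (ht : |t| ≤ 1/3) : |Ff t| ≤ 57 * t^4 ∧ |Ff t| ≤ 1 := by
  have hu0 : (0:ℝ) ≤ t^2 := sq_nonneg t
  have hu : t^2 ≤ 1/9 := by
    have h' := abs_le.mp ht
    nlinarith [h'.1, h'.2]
  have hFf : Ff t = (t^2)^2 + 2*(t^2)^3 + (9/2)*(t^2)^4 + 12*(t^2)^5 + (112/3)*(t^2)^6 := by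
    unfold Ff; ring
  have h3 : (t^2)^3 ≤ (t^2)^2 * (1/9) := by nlinarith [pow_nonneg hu0 2]
  have h4 : (t^2)^4 ≤ (t^2)^3 * (1/9) := by nlinarith [pow_nonneg hu0 3]
  have h5 : (t^2)^5 ≤ (t^2)^4 * (1/9) := by nlinarith [pow_nonneg hu0 4]
  have h6 : (t^2)^6 ≤ (t^2)^5 * (1/9) := by nlinarith [pow_nonneg hu0 5]
  have hnn : 0 ≤ Ff t := by
    rw [hFf]
    positivity
  have hb : Ff t ≤ 57 * t^4 := by
    have ht4 : t^4 = (t^2)^2 := by ring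
    rw [hFf, ht4]
    nlinarith [pow_nonneg hu0 2, pow_nonneg hu0 3, pow_nonneg hu0 4, pow_nonneg hu0 5]
  have ht4b : t^4 ≤ 1/81 := by nlinarith [sq_nonneg t]
  constructor
  · rw [abs_of_nonneg hnn]; exact hb
  · rw [abs_of_nonneg hnn]; nlinarith

lemma term2 : (fun t : ℝ => Real.exp (Ff t) - T3 (Ff t)) =O[nhds 0] fun t => t^14 := by
  rw [isBigO_iff]
  refine ⟨10556001, ?_⟩
  filter_upwards [ev_abs_le (1/3) (by norm_num)] with t ht
  obtain ⟨hb, h1⟩ := Ff_bound ht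
  have hexp := Real.exp_bound h1 (by norm_num : 0 < 4)
  have hsumT : ∑ m ∈ Finset.range 4, (Ff t)^m / m.factorial = T3 (Ff t) := by
    simp [Finset.sum_range_succ, Nat.factorial]
    unfold T3; ring
  rw [hsumT] at hexp
  have hc : ((4:ℕ).succ : ℝ) / ((4:ℕ).factorial * 4) ≤ 1 := by norm_num [Nat.factorial]
  have habs4 : |Ff t|^4 ≤ (57 * t^4)^4 :=
    pow_le_pow_left₀ (abs_nonneg _) hb 4
  have ht2 : t^2 ≤ 1 := by
    have h' := abs_le.mp ht
    nlinarith [h'.1, h'.2]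
  have h16 : t^16 ≤ t^14 := by nlinarith [pow_nonneg (sq_nonneg t) 7]
  have hfin : |Real.exp (Ff t) - T3 (Ff t)| ≤ 10556001 * t^14 := by
    have e1 : |Real.exp (Ff t) - T3 (Ff t)| ≤ |Ff t|^4 * (((4:ℕ).succ:ℝ) / ((4:ℕ).factorial * 4)) := hexp
    have e2 : |Ff t|^4 * (((4:ℕ).succ:ℝ) / ((4:ℕ).factorial * 4)) ≤ |Ff t|^4 * 1 :=
      mul_le_mul_of_nonneg_left hc (pow_nonneg (abs_nonneg _) 4)
    have e3 : (57 * t^4)^4 = 10556001 * t^16 := by ring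
    nlinarith [pow_nonneg (abs_nonneg (Ff t)) 4]
  rw [Real.norm_eq_abs, Real.norm_eq_abs, abs_of_nonneg (by positivity : (0:ℝ) ≤ t^14)]
  exact hfin

lemma term3 : (fun t : ℝ => T3 (Ff t) - Qf t) =O[nhds 0] fun t => t^14 := by
  have key3 : ∀ t : ℝ, T3 (Ff t) - Qf t = t^14 * Wp (t^2) := by
    intro t
    have hFp : Ff t = Fp (t^2) := by unfold Ff Fp; ring
    have hQp : Qf t = Qp (t^2) := by unfold Qf Qp; ring
    have hW := idW (t^2)
    rw [T3, hFp, hQp]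
    have : ((t:ℝ)^2)^7 = t^14 := by ring
    linarith [hW, this.symm ▸ hW]
  have hw : Tendsto (fun t : ℝ => Wp (t^2)) (nhds 0) (nhds (Wp 0)) := by
    have hWc : Continuous Wp := by unfold Wp; fun_prop
    exact (hWc.comp (continuous_pow 2)).tendsto' 0 (Wp 0) (by norm_num)
  have hwO : (fun t : ℝ => Wp (t^2)) =O[nhds 0] (fun _ => (1:ℝ)) := hw.isBigO_one ℝ
  have h := (isBigO_refl (fun t : ℝ => t^14) (nhds 0)).mul hwO
  refine h.congr' ?_ ?_
  · filter_upwards with t; rw [key3 t]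
  · filter_upwards with t; simp

lemma hsplit (t : ℝ) : Λ t = Real.exp (Ff t) * Real.exp (Ee t) := by
  unfold Λ Ee
  rw [← Real.exp_add]
  congr 1
  ring

lemma hΛQ : (fun t : ℝ => Λ t - Qf t) =O[nhds 0] fun t => t^14 := by
  have h := (term1.add term2).add term3
  refine h.congr' ?_ (by rfl)
  filter_upwards with t
  rw [hsplit t]
  ring

lemma hΛo : (fun t : ℝ => Λ t - Qf t) =o[nhds 0] fun t => t^12 :=
  hΛQ.trans_isLittleO (isLittleO_pow_pow (by norm_num))

/-! ### analyticity of Λ -/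

lemma hΛeq : Λ = fun t => (1 + t^2) * Real.exp (-(g t * F43 (16 * g t))) := by
  funext t
  unfold Λ
  rw [Real.exp_sub, Real.exp_log (by positivity), Real.exp_neg, div_eq_mul_inv]

lemma hAnalytic : AnalyticAt ℝ Λ 0 := by
  rw [hΛeq]
  have hg : AnalyticAt ℝ g 0 := by
    unfold g
    exact AnalyticAt.div
      ((analyticAt_id.pow 2).mul (((analyticAt_id.pow 2).sub analyticAt_const).pow 2))
      (((analyticAt_id.pow 2).add analyticAt_const).pow 4)
      (by norm_num)
  have h16 : AnalyticAt ℝ (fun t : ℝ => 16 * g t) 0 := analyticAt_const.mul hg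
  have hF : AnalyticAt ℝ F43 ((fun t : ℝ => 16 * g t) 0) := by
    have : (fun t : ℝ => 16 * g t) 0 = 0 := by simp [g_zero]
    rw [this]
    exact hF43at.analyticAt
  have hcomp' : AnalyticAt ℝ (F43 ∘ (fun t : ℝ => 16 * g t)) 0 := AnalyticAt.comp hF h16
  have hcomp : AnalyticAt ℝ (fun t : ℝ => F43 (16 * g t)) 0 := hcomp'
  have hmul : AnalyticAt ℝ (fun t : ℝ => g t * F43 (16 * g t)) 0 := hg.mul hcomp
  have hexp : AnalyticAt ℝ (fun t : ℝ => Real.exp (-(g t * F43 (16 * g t)))) 0 :=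
    analyticAt_rexp.comp hmul.neg
  exact (analyticAt_const.add (analyticAt_id.pow 2)).mul hexp

/-! ### the coefficients -/

noncomputable def q (k : ℕ) : ℝ :=
  if k = 0 then 1 else if k = 4 then 1 else if k = 6 then 2 else if k = 8 then 5
  else if k = 10 then 14 else if k = 12 then 44 else 0

lemma hQsum (t : ℝ) : ∑ k ∈ range 13, q k * t^k = Qf t := by
  simp [Finset.sum_range_succ, q, Qf]
  try ring

end MP

theorem multipolygon_series_coefficients :
    iteratedDeriv 0 Λ 0 = 1 ∧
    iteratedDeriv 1 Λ 0 = 0 ∧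
    iteratedDeriv 2 Λ 0 = 0 ∧
    iteratedDeriv 3 Λ 0 = 0 ∧
    iteratedDeriv 4 Λ 0 / (Nat.factorial 4) = 1 ∧
    iteratedDeriv 5 Λ 0 = 0 ∧
    iteratedDeriv 6 Λ 0 / (Nat.factorial 6) = 2 ∧
    iteratedDeriv 7 Λ 0 = 0 ∧
    iteratedDeriv 8 Λ 0 / (Nat.factorial 8) = 5 ∧
    iteratedDeriv 10 Λ 0 / (Nat.factorial 10) = 14 ∧
    iteratedDeriv 12 Λ 0 / (Nat.factorial 12) = 44 := by
  obtain ⟨p, hp⟩ := MP.hAnalytic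
  have hq : (fun t => Λ t - ∑ k ∈ Finset.range (12+1), MP.q k * t ^ k)
      =o[nhds 0] fun t => t^12 := by
    refine MP.hΛo.congr' ?_ (by rfl)
    filter_upwards with t
    rw [MP.hQsum t]
  have hco := MP.coeff_unique hp (N := 12) hq
  have hder := fun n => MP.iteratedDeriv_of_hasFPowerSeriesAt hp n
  have key : ∀ n, n ≤ 12 → iteratedDeriv n Λ 0 = (n.factorial : ℝ) * MP.q n := by
    intro n hn
    rw [hder, hco _ hn]
  refine ⟨?_, ?_, ?_, ?_, ?_, ?_, ?_, ?_, ?_, ?_, ?_⟩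
  · rw [key 0 (by norm_num)]; norm_num [MP.q]
  · rw [key 1 (by norm_num)]; norm_num [MP.q]
  · rw [key 2 (by norm_num)]; norm_num [MP.q]
  · rw [key 3 (by norm_num)]; norm_num [MP.q]
  · rw [key 4 (by norm_num)]; norm_num [MP.q, Nat.factorial]
  · rw [key 5 (by norm_num)]; norm_num [MP.q]
  · rw [key 6 (by norm_num)]; norm_num [MP.q, Nat.factorial]
  · rw [key 7 (by norm_num)]; norm_num [MP.q]
  · rw [key 8 (by norm_num)]; norm_num [MP.q, Nat.factorial]
  · rw [key 10 (by norm_num)]; norm_num [MP.q, Nat.factorial]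
  · rw [key 12 (by norm_num)]; norm_num [MP.q, Nat.factorial]
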